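/- Let n ≥ 1, N = 2^n, and ℓ ≥ 2. Let R ∈ ℤ^{n×n} be symmetric, and let a, b ∈ ℤ_{≥0}ⁿ have binary digit expansions a = a₀ + 2a₁ + 4a₂ + ⋯ and b = b₀ + 2b₁ + 4b₂ + ⋯ with a_k, b_k ∈ {0,1}ⁿ. Then τ_R^{(ℓ)} E(a,b) (τ_R^{(ℓ)})† = ξ_ℓ^{φ(R,a,b,ℓ)} · E(a₀, b₀ + a₀R) · τ_{R̃(R,a,ℓ)}^{(ℓ−1)}, where φ(R,a,b,ℓ) = (1 − 2^{ℓ−2}) a₀ R a₀ᵀ + 2^{ℓ−1}(a₀ b₁ᵀ + b₀ a₁ᵀ) (the exponent of ξ_ℓ taken mod 2^ℓ) and R̃(R,a,ℓ) = (1 + 2^{ℓ−2}) D_{a₀R} − (D_{ā₀} R D_{a₀} + D_{a₀} R D_{ā₀} + 2 D_{a₀ R D_{a₀}}), with D_x the diagonal matrix whose diagonal is the row vector x, and ā₀ = 𝟙 − a₀ where 𝟙 is the all-ones vector. -/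

import Mathlib

open Matrix

noncomputable section

/-- The 0/1 integer representative of a binary vector. -/
def intVec {n : ℕ} (v : Fin n → ZMod 2) : Fin n → ℤ := fun i => ((v i).val : ℤ)

/-- The generalized Hermitian Pauli matrix `E(a,b)` for integer row vectors `a, b ∈ ℤⁿ`. -/
def EIntPauli {n : ℕ} (a b : Fin n → ℤ) :
    Matrix (Fin n → ZMod 2) (Fin n → ZMod 2) ℂ :=
  Matrix.of fun u v =>
    Complex.I ^ (∑ i, a i * b i) *
      (-1 : ℂ) ^ (∑ i, intVec v i * b i) *
      (if u = v + (fun i => ((a i : ZMod 2))) then (1 : ℂ) else 0)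

/-- `ξ_ℓ = e^{2πi/2^ℓ}`. -/
def xi (ℓ : ℕ) : ℂ := Complex.exp (2 * (Real.pi : ℂ) * Complex.I / (2 ^ ℓ))

/-- The quadratic form diagonal (QFD) gate `τ_R^{(ℓ)}` with `(v,v)` entry `ξ_ℓ^{v R vᵀ}`. -/
def tauR {n : ℕ} (ℓ : ℕ) (R : Matrix (Fin n) (Fin n) ℤ) :
    Matrix (Fin n → ZMod 2) (Fin n → ZMod 2) ℂ :=
  Matrix.diagonal fun v => xi ℓ ^ (∑ i, intVec v i * Matrix.mulVec R (intVec v) i)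

/-- The 0-th binary digit vector of a nonnegative integer vector. -/
def dig0 {n : ℕ} (a : Fin n → ℕ) : Fin n → ℤ := fun i => ((a i % 2 : ℕ) : ℤ)

/-- The 1-st binary digit vector of a nonnegative integer vector. -/
def dig1 {n : ℕ} (a : Fin n → ℕ) : Fin n → ℤ := fun i => ((a i / 2 % 2 : ℕ) : ℤ)

/-- The global phase exponent `φ(R,a,b,ℓ)`. -/
def phiE {n : ℕ} (R : Matrix (Fin n) (Fin n) ℤ) (a b : Fin n → ℕ) (ℓ : ℕ) : ℤ :=
  (1 - 2 ^ (ℓ - 2)) * (∑ i, dig0 a i * Matrix.mulVec R (dig0 a) i) +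
    2 ^ (ℓ - 1) * ((∑ i, dig0 a i * dig1 b i) + ∑ i, dig0 b i * dig1 a i)

/-- The symmetric matrix `R̃(R,a,ℓ)` describing the residual QFD gate. -/
def Rtilde {n : ℕ} (R : Matrix (Fin n) (Fin n) ℤ) (a : Fin n → ℕ) (ℓ : ℕ) :
    Matrix (Fin n) (Fin n) ℤ :=
  (1 + 2 ^ (ℓ - 2) : ℤ) • Matrix.diagonal (Matrix.vecMul (dig0 a) R) -
    (Matrix.diagonal (fun i => 1 - dig0 a i) * R * Matrix.diagonal (dig0 a) +
      Matrix.diagonal (dig0 a) * R * Matrix.diagonal (fun i => 1 - dig0 a i) +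
      (2 : ℤ) • Matrix.diagonal (Matrix.vecMul (dig0 a) (R * Matrix.diagonal (dig0 a))))

-- ## auxiliary lemmas

lemma xi_ne (ℓ : ℕ) : xi ℓ ≠ 0 := Complex.exp_ne_zero _

lemma xi_zpow (ℓ : ℕ) (m : ℤ) :
    xi ℓ ^ m = Complex.exp ((m : ℂ) * (2 * (Real.pi:ℂ) * Complex.I) / 2^ℓ) := by
  rw [xi, ← Complex.exp_int_mul]; ring_nf

lemma two_pow_ne (ℓ : ℕ) : ((2:ℂ)^ℓ) ≠ 0 := pow_ne_zero _ two_ne_zero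

lemma xi_top (ℓ : ℕ) : xi ℓ ^ ((2:ℤ)^ℓ) = 1 := by
  rw [xi_zpow]
  have h : (((2:ℤ)^ℓ : ℤ) : ℂ) * (2 * (Real.pi:ℂ) * Complex.I) / 2^ℓ
      = 2 * (Real.pi:ℂ) * Complex.I := by
    push_cast
    field_simp
  rw [h, Complex.exp_two_pi_mul_I]

lemma xi_congr (ℓ : ℕ) {s t : ℤ} (h : (2:ℤ)^ℓ ∣ s - t) : xi ℓ ^ s = xi ℓ ^ t := by
  obtain ⟨k, hk⟩ := h
  have hs : s = t + 2^ℓ * k := by linarith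
  rw [hs, zpow_add₀ (xi_ne ℓ), _root_.zpow_mul, xi_top, _root_.one_zpow, mul_one]

lemma xi_I {ℓ : ℕ} (hℓ : 2 ≤ ℓ) : xi ℓ ^ ((2:ℤ)^(ℓ-2)) = Complex.I := by
  rw [xi_zpow]
  have h : (2:ℂ)^ℓ = 2^(ℓ-2) * 4 := by
    conv_lhs => rw [show ℓ = (ℓ-2)+2 from by omega]
    rw [pow_add]; norm_num
  push_cast [h]
  rw [show ((2:ℂ)^(ℓ-2) * (2 * (Real.pi:ℂ) * Complex.I) / (2^(ℓ-2) * 4))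
      = (Real.pi:ℂ)/2 * Complex.I by
    field_simp [two_pow_ne (ℓ-2)]; ring]
  rw [Complex.exp_mul_I]
  norm_cast
  simp [Real.cos_pi_div_two, Real.sin_pi_div_two]

lemma xi_neg {ℓ : ℕ} (hℓ : 1 ≤ ℓ) : xi ℓ ^ ((2:ℤ)^(ℓ-1)) = -1 := by
  rw [xi_zpow]
  have h : (2:ℂ)^ℓ = 2^(ℓ-1) * 2 := by
    conv_lhs => rw [show ℓ = (ℓ-1)+1 from by omega]
    rw [pow_add]; norm_num
  push_cast [h]
  rw [show ((2:ℂ)^(ℓ-1) * (2 * (Real.pi:ℂ) * Complex.I) / (2^(ℓ-1) * 2))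
      = (Real.pi:ℂ) * Complex.I by
    field_simp [two_pow_ne (ℓ-1)]]
  exact Complex.exp_pi_mul_I

lemma xi_pred {ℓ : ℕ} (hℓ : 1 ≤ ℓ) : xi (ℓ-1) = xi ℓ ^ (2:ℤ) := by
  rw [xi_zpow, xi]
  congr 1
  have h : (2:ℂ)^ℓ = 2^(ℓ-1) * 2 := by
    conv_lhs => rw [show ℓ = (ℓ-1)+1 from by omega]
    rw [pow_add]; norm_num
  rw [h]
  field_simp [two_pow_ne (ℓ-1)]
  ring

lemma star_xi_zpow (ℓ : ℕ) (m : ℤ) : star (xi ℓ ^ m) = xi ℓ ^ (-m) := by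
  rw [xi_zpow, xi_zpow]
  rw [show star (Complex.exp ((m:ℂ) * (2*(Real.pi:ℂ)*Complex.I)/2^ℓ)) =
    Complex.exp (starRingEnd ℂ ((m:ℂ) * (2*(Real.pi:ℂ)*Complex.I)/2^ℓ)) from (Complex.exp_conj _).symm]
  congr 1
  simp only [map_div₀, _root_.map_mul, map_pow, map_intCast, map_ofNat, Complex.conj_I,
    Complex.conj_ofReal]
  push_cast
  ring

lemma key_dvd (a b : ℕ) (c : ℤ) (hc : c = 0 ∨ c = 1) :
    (4:ℤ) ∣ ((a%2:ℕ):ℤ)*((b%2:ℕ):ℤ) + 2*((a%2:ℕ):ℤ)*((b/2%2:ℕ):ℤ)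
      + 2*((a/2%2:ℕ):ℤ)*((b%2:ℕ):ℤ) + 2*c*((b%2:ℕ):ℤ)
      - (a:ℤ)*(b:ℤ) - 2*c*(b:ℤ) := by
  obtain ⟨p, hp⟩ : ∃ p:ℤ, (a:ℤ)*(b:ℤ) = ((a%4:ℕ):ℤ)*((b%4:ℕ):ℤ) + 4*p := by
    refine ⟨((a%4:ℕ):ℤ)*(b/4:ℕ) + (a/4:ℕ)*((b%4:ℕ):ℤ) + 4*(a/4:ℕ)*(b/4:ℕ), ?_⟩
    have ha : (a:ℤ) = ((a%4:ℕ):ℤ) + 4*((a/4:ℕ):ℤ) := by push_cast; omega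
    have hb : (b:ℤ) = ((b%4:ℕ):ℤ) + 4*((b/4:ℕ):ℤ) := by push_cast; omega
    rw [ha, hb]; ring
  obtain ⟨q, hq⟩ : ∃ q:ℤ, 2*c*(b:ℤ) = 2*c*((b%4:ℕ):ℤ) + 4*q := by
    refine ⟨2*c*(b/4:ℕ), ?_⟩
    have hb : (b:ℤ) = ((b%4:ℕ):ℤ) + 4*((b/4:ℕ):ℤ) := by push_cast; omega
    rw [hb]; ring
  rw [hp, hq]
  have h1 : a % 2 = a % 4 % 2 := by omega
  have h2 : a / 2 % 2 = a % 4 / 2 % 2 := by omega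
  have h3 : b % 2 = b % 4 % 2 := by omega
  have h4 : b / 2 % 2 = b % 4 / 2 % 2 := by omega
  rw [h1, h2, h3, h4]
  have hx : a % 4 < 4 := Nat.mod_lt _ (by norm_num)
  have hy : b % 4 < 4 := Nat.mod_lt _ (by norm_num)
  generalize a % 4 = x at hx ⊢
  generalize b % 4 = y at hy ⊢
  interval_cases x <;> interval_cases y <;> rcases hc with rfl|rfl <;> norm_num <;> omega

lemma zmod_val_add (x : ZMod 2) (m : ℕ) :
    (((x + (m : ZMod 2)).val : ℤ)) = (x.val:ℤ) + ((m%2:ℕ):ℤ) - 2*(x.val:ℤ)*((m%2:ℕ):ℤ) := by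
  rw [← ZMod.natCast_mod m 2]
  rcases Nat.mod_two_eq_zero_or_one m with h|h <;> rw [h] <;> revert x <;> decide

lemma dot_symm {n : ℕ} (R : Matrix (Fin n) (Fin n) ℤ) (hR : R.IsSymm) (x y : Fin n → ℤ) :
    x ⬝ᵥ R *ᵥ y = y ⬝ᵥ R *ᵥ x := by
  rw [Matrix.dotProduct_mulVec, ← Matrix.mulVec_transpose, hR.eq, dotProduct_comm]

lemma expand_quad {n : ℕ} (R : Matrix (Fin n) (Fin n) ℤ) (hR : R.IsSymm) (c α : Fin n → ℤ) :
    (c + α - (2:ℤ) • (c*α)) ⬝ᵥ R *ᵥ (c + α - (2:ℤ) • (c*α))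
      = c ⬝ᵥ R *ᵥ c + α ⬝ᵥ R *ᵥ α + 4*((c*α) ⬝ᵥ R *ᵥ (c*α)) + 2*(c ⬝ᵥ R *ᵥ α)
        - 4*(c ⬝ᵥ R *ᵥ (c*α)) - 4*(α ⬝ᵥ R *ᵥ (c*α)) := by
  simp only [Matrix.mulVec_add, Matrix.mulVec_sub, Matrix.mulVec_smul,
    add_dotProduct, sub_dotProduct, dotProduct_add,
    dotProduct_sub, dotProduct_smul, smul_dotProduct]
  rw [dot_symm R hR α c, dot_symm R hR (c*α) c, dot_symm R hR (c*α) α]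
  simp only [smul_eq_mul]
  ring

lemma diag_quad {n : ℕ} (w c : Fin n → ℤ) (hc : ∀ i, c i * c i = c i) :
    c ⬝ᵥ (Matrix.diagonal w) *ᵥ c = w ⬝ᵥ c := by
  simp only [dotProduct, Matrix.mulVec_diagonal]
  exact Finset.sum_congr rfl fun i _ => by
    rw [show c i * (w i * c i) = w i * (c i * c i) by ring, hc i]

lemma quad_DRD {n : ℕ} (R : Matrix (Fin n) (Fin n) ℤ) (w₁ w₂ c : Fin n → ℤ) :
    c ⬝ᵥ (Matrix.diagonal w₁ * R * Matrix.diagonal w₂) *ᵥ c = (w₁*c) ⬝ᵥ R *ᵥ (w₂*c) := by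
  rw [← Matrix.mulVec_mulVec, ← Matrix.mulVec_mulVec]
  simp only [dotProduct]
  congr 1
  funext i
  simp only [Matrix.mulVec_diagonal, Pi.mul_apply]
  rw [show (R *ᵥ (Matrix.diagonal w₂ *ᵥ c)) i = (R *ᵥ (w₂ * c)) i by
    congr 1; funext j; simp [Matrix.mulVec_diagonal]]
  ring

lemma diag_vecquad {n : ℕ} (R : Matrix (Fin n) (Fin n) ℤ) (α c : Fin n → ℤ)
    (hc : ∀ i, c i * c i = c i) :
    c ⬝ᵥ (Matrix.diagonal (α ᵥ* R)) *ᵥ c = α ⬝ᵥ R *ᵥ c := by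
  rw [diag_quad _ _ hc, ← Matrix.dotProduct_mulVec]


/-- Action of a QFD gate on a Pauli matrix:
`τ_R^{(ℓ)} E(a,b) (τ_R^{(ℓ)})† = ξ_ℓ^{φ(R,a,b,ℓ)} E(a₀, b₀ + a₀R) τ_{R̃(R,a,ℓ)}^{(ℓ−1)}`. -/
theorem qfd_conjugation (n ℓ : ℕ) (hn : 1 ≤ n) (hℓ : 2 ≤ ℓ)
    (R : Matrix (Fin n) (Fin n) ℤ) (hR : R.IsSymm) (a b : Fin n → ℕ) :
    tauR ℓ R * EIntPauli (fun i => (a i : ℤ)) (fun i => (b i : ℤ)) * (tauR ℓ R)ᴴ =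
      xi ℓ ^ phiE R a b ℓ •
        (EIntPauli (dig0 a) (dig0 b + Matrix.vecMul (dig0 a) R) *
          tauR (ℓ - 1) (Rtilde R a ℓ)) := by
  have hℓ1 : 1 ≤ ℓ := by omega
  ext u v
  rw [tauR, Matrix.diagonal_conjTranspose]
  simp only [Matrix.mul_diagonal, Matrix.diagonal_mul, Matrix.smul_apply, smul_eq_mul,
    EIntPauli, Matrix.of_apply, Pi.star_apply, tauR]
  have hw : (fun i => (((a i : ℤ)) : ZMod 2)) = (fun i => ((dig0 a i : ZMod 2))) := by
    funext i
    show (((a i : ℕ) : ℤ) : ZMod 2) = (((a i % 2 : ℕ) : ℤ) : ZMod 2)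
    rw [Int.cast_natCast, Int.cast_natCast]
    exact (ZMod.natCast_mod (a i) 2).symm
  rw [hw]
  by_cases hcond : u = v + fun i => ((dig0 a i : ZMod 2))
  · -- main case
    simp only [if_pos hcond, mul_one]
    have hc01 : ∀ i, intVec v i = 0 ∨ intVec v i = 1 := by
      intro i
      have h2 : (v i).val < 2 := ZMod.val_lt (v i)
      unfold intVec; omega
    have hc2 : ∀ i, intVec v i * intVec v i = intVec v i := by
      intro i; rcases hc01 i with h|h <;> rw [h] <;> ring
    have hu : intVec u = intVec v + dig0 a - (2:ℤ) • (intVec v * dig0 a) := by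
      funext i
      have hui : u i = v i + ((a i : ℕ) : ZMod 2) := by
        rw [hcond]
        show v i + ((dig0 a i : ℤ) : ZMod 2) = _
        congr 1
        show (((a i % 2 : ℕ) : ℤ) : ZMod 2) = (((a i : ℕ)) : ZMod 2)
        rw [Int.cast_natCast]
        exact ZMod.natCast_mod (a i) 2
      show ((u i).val : ℤ) = intVec v i + dig0 a i - 2 * (intVec v i * dig0 a i)
      rw [hui, zmod_val_add]
      show _ = ((v i).val : ℤ) + ((a i % 2 : ℕ) : ℤ) - 2 * (((v i).val : ℤ) * ((a i % 2 : ℕ) : ℤ))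
      ring
    -- sum rewrites
    have e1 : (∑ i, intVec u i * (R *ᵥ intVec u) i)
        = intVec v ⬝ᵥ R *ᵥ intVec v + dig0 a ⬝ᵥ R *ᵥ dig0 a
          + 4*((intVec v * dig0 a) ⬝ᵥ R *ᵥ (intVec v * dig0 a))
          + 2*(intVec v ⬝ᵥ R *ᵥ dig0 a)
          - 4*(intVec v ⬝ᵥ R *ᵥ (intVec v * dig0 a))
          - 4*(dig0 a ⬝ᵥ R *ᵥ (intVec v * dig0 a)) := by
      rw [show (∑ i, intVec u i * (R *ᵥ intVec u) i) = intVec u ⬝ᵥ R *ᵥ intVec u from rfl,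
        hu, expand_quad R hR]
    have e2 : (∑ i, intVec v i * (R *ᵥ intVec v) i) = intVec v ⬝ᵥ R *ᵥ intVec v := rfl
    have e3 : (∑ i, intVec v i * (Rtilde R a ℓ *ᵥ intVec v) i)
        = (1+2^(ℓ-2)) * (intVec v ⬝ᵥ R *ᵥ dig0 a)
          - 2*(intVec v ⬝ᵥ R *ᵥ (intVec v * dig0 a))
          + 2*((intVec v * dig0 a) ⬝ᵥ R *ᵥ (intVec v * dig0 a))
          - 2*(dig0 a ⬝ᵥ R *ᵥ (intVec v * dig0 a)) := by
      rw [show (∑ i, intVec v i * (Rtilde R a ℓ *ᵥ intVec v) i)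
          = intVec v ⬝ᵥ (Rtilde R a ℓ) *ᵥ intVec v from rfl, Rtilde]
      rw [Matrix.sub_mulVec, Matrix.add_mulVec, Matrix.add_mulVec,
        Matrix.smul_mulVec, Matrix.smul_mulVec,
        dotProduct_sub, dotProduct_add, dotProduct_add,
        dotProduct_smul, dotProduct_smul]
      rw [diag_vecquad R _ _ hc2, quad_DRD, quad_DRD]
      rw [diag_quad _ _ hc2, ← Matrix.dotProduct_mulVec, ← Matrix.mulVec_mulVec]
      rw [show (Matrix.diagonal (dig0 a) *ᵥ intVec v) = dig0 a * intVec v by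
        funext j; rw [Matrix.mulVec_diagonal]; rfl]
      rw [show ((fun i => 1 - dig0 a i) * intVec v) = intVec v - intVec v * dig0 a by
        funext j; show (1 - dig0 a j) * intVec v j = _; simp [Pi.sub_apply]; ring]
      rw [show (dig0 a * intVec v) = intVec v * dig0 a by
        funext j; exact mul_comm (dig0 a j) (intVec v j)]
      simp only [Matrix.mulVec_sub, dotProduct_sub, sub_dotProduct, smul_eq_mul]
      rw [dot_symm R hR (dig0 a) (intVec v), dot_symm R hR (intVec v * dig0 a) (intVec v)]
      ring
    have e4 : (∑ i, dig0 a i * (dig0 b + dig0 a ᵥ* R) i)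
        = (∑ i, dig0 a i * dig0 b i) + dig0 a ⬝ᵥ R *ᵥ dig0 a := by
      simp only [Pi.add_apply, mul_add, Finset.sum_add_distrib]
      congr 1
      rw [show (∑ i, dig0 a i * (dig0 a ᵥ* R) i) = dig0 a ⬝ᵥ (dig0 a ᵥ* R) from rfl,
        dotProduct_comm, ← Matrix.dotProduct_mulVec]
    have e5 : (∑ i, intVec v i * (dig0 b + dig0 a ᵥ* R) i)
        = (∑ i, intVec v i * dig0 b i) + intVec v ⬝ᵥ R *ᵥ dig0 a := by
      simp only [Pi.add_apply, mul_add, Finset.sum_add_distrib]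
      congr 1
      rw [show (∑ i, intVec v i * (dig0 a ᵥ* R) i) = intVec v ⬝ᵥ (dig0 a ᵥ* R) from rfl,
        dotProduct_comm, ← Matrix.dotProduct_mulVec, dot_symm R hR]
    -- convert to powers of xi
    rw [star_xi_zpow, xi_pred hℓ1]
    rw [show Complex.I = xi ℓ ^ ((2:ℤ)^(ℓ-2)) from (xi_I hℓ).symm]
    rw [show (-1:ℂ) = xi ℓ ^ ((2:ℤ)^(ℓ-1)) from (xi_neg hℓ1).symm]
    rw [← _root_.zpow_mul, ← _root_.zpow_mul, ← _root_.zpow_mul, ← _root_.zpow_mul,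
      ← _root_.zpow_mul]
    rw [← zpow_add₀ (xi_ne ℓ), ← zpow_add₀ (xi_ne ℓ), ← zpow_add₀ (xi_ne ℓ),
      ← zpow_add₀ (xi_ne ℓ), ← zpow_add₀ (xi_ne ℓ), ← zpow_add₀ (xi_ne ℓ)]
    apply xi_congr
    rw [e1, e2, e3, e4, e5]
    simp only [phiE]
    -- key divisibility
    obtain ⟨t, ht⟩ : (4:ℤ) ∣ (∑ i, (dig0 a i * dig0 b i + 2*(dig0 a i * dig1 b i)
        + 2*(dig0 b i * dig1 a i) + 2*(intVec v i * dig0 b i)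
        - (a i:ℤ)*(b i:ℤ) - 2*(intVec v i * (b i:ℤ)))) := by
      refine Finset.dvd_sum fun i _ => ?_
      obtain ⟨k, hk⟩ := key_dvd (a i) (b i) (intVec v i) (hc01 i)
      refine ⟨k, ?_⟩
      rw [← hk]
      unfold dig0 dig1 intVec
      ring
    have hsplit : (∑ i, (dig0 a i * dig0 b i + 2*(dig0 a i * dig1 b i)
        + 2*(dig0 b i * dig1 a i) + 2*(intVec v i * dig0 b i)
        - (a i:ℤ)*(b i:ℤ) - 2*(intVec v i * (b i:ℤ))))
        = (∑ i, dig0 a i * dig0 b i) + 2*(∑ i, dig0 a i * dig1 b i)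
          + 2*(∑ i, dig0 b i * dig1 a i) + 2*(∑ i, intVec v i * dig0 b i)
          - (∑ i, (a i:ℤ)*(b i:ℤ)) - 2*(∑ i, intVec v i * (b i:ℤ)) := by
      simp only [Finset.sum_add_distrib, Finset.sum_sub_distrib, ← Finset.mul_sum]
    have hW : (∑ i, dig0 a i * dig0 b i) + 2*(∑ i, dig0 a i * dig1 b i)
          + 2*(∑ i, dig0 b i * dig1 a i) + 2*(∑ i, intVec v i * dig0 b i)
          - (∑ i, (a i:ℤ)*(b i:ℤ)) - 2*(∑ i, intVec v i * (b i:ℤ)) = 4*t := by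
      rw [← hsplit, ht]
    have hp1 : (2:ℤ)^(ℓ-1) = 2*2^(ℓ-2) := by
      conv_lhs => rw [show ℓ-1 = (ℓ-2)+1 from by omega]
      rw [pow_succ]; ring
    have hp0 : (2:ℤ)^ℓ = 4*2^(ℓ-2) := by
      conv_lhs => rw [show ℓ = (ℓ-2)+2 from by omega]
      rw [pow_add]; ring
    rw [hp1, hp0]
    rw [show (∑ i, dig0 a i * (R *ᵥ dig0 a) i) = dig0 a ⬝ᵥ R *ᵥ dig0 a from rfl]
    refine ⟨-(intVec v ⬝ᵥ R *ᵥ dig0 a + t), ?_⟩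
    linear_combination (-(2:ℤ)^(ℓ-2)) * hW
  · simp [if_neg hcond]

end
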